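/- arXiv:2007.03003 — 9 statements merged into one kernel-verified Lean document; each statement's English description precedes it below -/
import Mathlib

section
/- There is a bijection between the set of orthocomplementations Ψ on the lattice G(ℝ²) of linear subspaces of ℝ² (ordered by inclusion, with meet the intersection and join the sum) and the set of involutive maps ψ : [0, π) → [0, π) without fixed points; under this bijection Ψ and ψ correspond if and only if Ψ(span{(cos θ, sin θ)}) = span{(cos ψ(θ), sin ψ(θ))} for all θ ∈ [0, π). -/
/-- The line in `ℝ²` spanned by `(cos θ, sin θ)`. -/
noncomputable def line (θ : ℝ) : Submodule ℝ (Fin 2 → ℝ) :=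
  Submodule.span ℝ {![Real.cos θ, Real.sin θ]}

/-- An orthocomplementation on a lattice bounded from below: an antitone, involutive,
separating map. -/
def IsOrthocompl {L : Type*} [Lattice L] [OrderBot L] (Ψ : L → L) : Prop :=
  (∀ a b : L, b ≤ a → Ψ a ≤ Ψ b) ∧ (∀ a : L, Ψ (Ψ a) = a) ∧
  (∀ a b : L, b ≤ a → b ≤ Ψ a → b = ⊥)


open Real Submodule

lemma uvec_ne_zero (θ : ℝ) : ![Real.cos θ, Real.sin θ] ≠ 0 := by
  intro h
  have h0 : Real.cos θ = 0 := congrFun h 0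
  have h1 : Real.sin θ = 0 := congrFun h 1
  have := Real.sin_sq_add_cos_sq θ
  rw [h0, h1] at this; norm_num at this

lemma finrank_line (θ : ℝ) : Module.finrank ℝ (line θ) = 1 :=
  finrank_span_singleton (uvec_ne_zero θ)

lemma line_ne_bot (θ : ℝ) : line θ ≠ ⊥ := by
  intro h
  have := finrank_line θ
  rw [h] at this
  simp at this

lemma line_ne_top (θ : ℝ) : line θ ≠ ⊤ := by
  intro h
  have := finrank_line θ
  rw [h] at this
  rw [finrank_top, Module.finrank_fin_fun] at this
  norm_num at this

lemma line_smul {θ : ℝ} {c : ℝ} (hc : c ≠ 0) :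
    Submodule.span ℝ {c • ![Real.cos θ, Real.sin θ]} = line θ :=
  Submodule.span_singleton_smul_eq (IsUnit.mk0 c hc) _

lemma line_add_int_mul_pi (θ : ℝ) (n : ℤ) : line (θ + n * π) = line θ := by
  have h : ![Real.cos (θ + n * π), Real.sin (θ + n * π)]
      = ((-1 : ℝ) ^ n) • ![Real.cos θ, Real.sin θ] := by
    funext i
    fin_cases i <;>
      simp [Real.cos_add_int_mul_pi, Real.sin_add_int_mul_pi]
  rw [line, h, line_smul]
  positivity

lemma line_inj {θ θ' : ℝ} (h : θ ∈ Set.Ico 0 π) (h' : θ' ∈ Set.Ico 0 π)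
    (e : line θ = line θ') : θ = θ' := by
  have hm : ![Real.cos θ', Real.sin θ'] ∈ line θ := by
    rw [e]; exact Submodule.mem_span_singleton_self _
  obtain ⟨c, hc⟩ := Submodule.mem_span_singleton.1 hm
  have h0 : c * Real.cos θ = Real.cos θ' := by
    have := congrFun hc 0; simpa using this
  have h1 : c * Real.sin θ = Real.sin θ' := by
    have := congrFun hc 1; simpa using this
  have hs : Real.sin (θ' - θ) = 0 := by
    rw [Real.sin_sub, ← h0, ← h1]; ring
  have : θ' - θ = 0 := by
    rw [Real.sin_eq_zero_iff_of_lt_of_lt] at hs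
    · exact hs
    · linarith [h'.1, h.2]
    · linarith [h.1, h'.2]
  linarith

lemma exists_line_eq {W : Submodule ℝ (Fin 2 → ℝ)} (hb : W ≠ ⊥) (ht : W ≠ ⊤) :
    ∃ θ : Set.Ico (0:ℝ) π, W = line θ := by
  -- W has finrank 1
  have hle : Module.finrank ℝ W ≤ 2 := by
    have := Submodule.finrank_le W
    rwa [Module.finrank_fin_fun] at this
  have h0 : Module.finrank ℝ W ≠ 0 := by
    intro h
    exact hb (by rwa [Submodule.finrank_eq_zero] at h)
  have h2 : Module.finrank ℝ W ≠ 2 := by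
    intro h
    exact ht (Submodule.eq_top_of_finrank_eq (by rw [h, Module.finrank_fin_fun]))
  have h1 : Module.finrank ℝ W = 1 := by omega
  -- get a spanning vector
  obtain ⟨v, hv0, hv⟩ : ∃ v : Fin 2 → ℝ, v ≠ 0 ∧ W = Submodule.span ℝ {v} := by
    obtain ⟨⟨v, hvW⟩, hvne, hsp⟩ := finrank_eq_one_iff' (K := ℝ) (V := W) |>.1 h1
    refine ⟨v, ?_, ?_⟩
    · intro h; exact hvne (by ext; simp [h])
    · apply le_antisymm
      · intro w hw
        obtain ⟨c, hc⟩ := hsp ⟨w, hw⟩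
        have : c • v = w := congrArg Subtype.val hc
        rw [← this]
        exact Submodule.smul_mem _ _ (Submodule.mem_span_singleton_self v)
      · rw [Submodule.span_le]; simpa using hvW
  -- get an angle
  set z : ℂ := ⟨v 0, v 1⟩ with hz
  have hzne : z ≠ 0 := by
    intro h
    apply hv0
    funext i
    fin_cases i
    · exact congrArg Complex.re h
    · exact congrArg Complex.im h
  have habs : (‖z‖ : ℝ) ≠ 0 := norm_ne_zero_iff.mpr hzne
  have hvz : v = ‖z‖ • ![Real.cos (Complex.arg z), Real.sin (Complex.arg z)] := by
    funext i
    fin_cases i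
    · show v 0 = ‖z‖ * Real.cos (Complex.arg z)
      rw [Complex.cos_arg hzne, mul_div_cancel₀ _ habs]
    · show v 1 = ‖z‖ * Real.sin (Complex.arg z)
      rw [Complex.sin_arg, mul_div_cancel₀ _ habs]
  have hWline : W = line (Complex.arg z) := by
    rw [hv, hvz, line_smul habs]
  refine ⟨⟨toIcoMod Real.pi_pos 0 (Complex.arg z), toIcoMod_mem_Ico' Real.pi_pos _⟩, ?_⟩
  have harg : toIcoMod Real.pi_pos 0 (Complex.arg z)
      + (toIcoDiv Real.pi_pos 0 (Complex.arg z) : ℝ) * π = Complex.arg z := by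
    rw [toIcoMod, zsmul_eq_mul]; ring
  show W = line (toIcoMod Real.pi_pos 0 (Complex.arg z))
  have hl : line (Complex.arg z) = line (toIcoMod Real.pi_pos 0 (Complex.arg z)) := by
    conv_lhs => rw [← harg]
    exact line_add_int_mul_pi _ _
  rw [hWline, hl]

open scoped Classical in
/-- The angle in `[0, π)` of a 1-dimensional subspace (junk value otherwise). -/
noncomputable def angIco (W : Submodule ℝ (Fin 2 → ℝ)) : Set.Ico (0:ℝ) π :=
  if h : ∃ θ : Set.Ico (0:ℝ) π, W = line θ then h.choose
  else ⟨0, by constructor <;> simp [Real.pi_pos]⟩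

lemma line_angIco {W : Submodule ℝ (Fin 2 → ℝ)} (hb : W ≠ ⊥) (ht : W ≠ ⊤) :
    line (angIco W : ℝ) = W := by
  have h := exists_line_eq hb ht
  rw [angIco]
  rw [dif_pos h]
  exact h.choose_spec.symm

lemma angIco_line (θ : Set.Ico (0:ℝ) π) : angIco (line (θ : ℝ)) = θ := by
  have h : ∃ θ' : Set.Ico (0:ℝ) π, line (θ : ℝ) = line (θ' : ℝ) := ⟨θ, rfl⟩
  rw [angIco, dif_pos h]
  exact Subtype.ext (line_inj h.choose.2 θ.2 h.choose_spec.symm)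

lemma le_line {b : Submodule ℝ (Fin 2 → ℝ)} {θ : ℝ} (hle : b ≤ line θ) (hb : b ≠ ⊥) :
    b = line θ := by
  refine Submodule.eq_of_le_of_finrank_eq hle ?_
  rw [finrank_line]
  have hb1 : 1 ≤ Module.finrank ℝ b := by
    rw [Nat.one_le_iff_ne_zero]
    intro h
    exact hb (by rwa [Submodule.finrank_eq_zero] at h)
  have hb2 : Module.finrank ℝ b ≤ 1 := by
    have := Submodule.finrank_mono hle
    rwa [finrank_line] at this
  omega

lemma ortho_bot {Ψ : Submodule ℝ (Fin 2 → ℝ) → Submodule ℝ (Fin 2 → ℝ)}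
    (hΨ : IsOrthocompl Ψ) : Ψ ⊥ = ⊤ := by
  have := hΨ.1 (Ψ ⊤) ⊥ bot_le
  rw [hΨ.2.1] at this
  exact top_le_iff.1 this

lemma ortho_top {Ψ : Submodule ℝ (Fin 2 → ℝ) → Submodule ℝ (Fin 2 → ℝ)}
    (hΨ : IsOrthocompl Ψ) : Ψ ⊤ = ⊥ := by
  have := hΨ.1 ⊤ (Ψ ⊥) le_top
  rw [hΨ.2.1] at this
  exact le_bot_iff.1 this

lemma ortho_line_ne_bot {Ψ : Submodule ℝ (Fin 2 → ℝ) → Submodule ℝ (Fin 2 → ℝ)}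
    (hΨ : IsOrthocompl Ψ) (θ : ℝ) : Ψ (line θ) ≠ ⊥ := by
  intro h
  have : Ψ (Ψ (line θ)) = Ψ ⊥ := by rw [h]
  rw [hΨ.2.1, ortho_bot hΨ] at this
  exact line_ne_top θ this

lemma ortho_line_ne_top {Ψ : Submodule ℝ (Fin 2 → ℝ) → Submodule ℝ (Fin 2 → ℝ)}
    (hΨ : IsOrthocompl Ψ) (θ : ℝ) : Ψ (line θ) ≠ ⊤ := by
  intro h
  have : Ψ (Ψ (line θ)) = Ψ ⊤ := by rw [h]
  rw [hΨ.2.1, ortho_top hΨ] at this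
  exact line_ne_bot θ this

lemma bot_ne_top' : (⊥ : Submodule ℝ (Fin 2 → ℝ)) ≠ ⊤ := bot_ne_top

open scoped Classical in
noncomputable def toPhi (ψ : Set.Ico (0:ℝ) π → Set.Ico (0:ℝ) π)
    (W : Submodule ℝ (Fin 2 → ℝ)) : Submodule ℝ (Fin 2 → ℝ) :=
  if W = ⊥ then ⊤ else if W = ⊤ then ⊥ else line (ψ (angIco W) : ℝ)

lemma toPhi_bot (ψ : Set.Ico (0:ℝ) π → Set.Ico (0:ℝ) π) : toPhi ψ ⊥ = ⊤ := by
  rw [toPhi, if_pos rfl]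

lemma toPhi_top (ψ : Set.Ico (0:ℝ) π → Set.Ico (0:ℝ) π) : toPhi ψ ⊤ = ⊥ := by
  rw [toPhi, if_neg (Ne.symm bot_ne_top'), if_pos rfl]

lemma toPhi_of_ne (ψ : Set.Ico (0:ℝ) π → Set.Ico (0:ℝ) π) {W : Submodule ℝ (Fin 2 → ℝ)}
    (hb : W ≠ ⊥) (ht : W ≠ ⊤) : toPhi ψ W = line ((ψ (angIco W) : ℝ)) := by
  rw [toPhi, if_neg hb, if_neg ht]

lemma toPhi_line (ψ : Set.Ico (0:ℝ) π → Set.Ico (0:ℝ) π) (θ : Set.Ico (0:ℝ) π) :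
    toPhi ψ (line (θ : ℝ)) = line ((ψ θ : ℝ)) := by
  rw [toPhi_of_ne ψ (line_ne_bot _) (line_ne_top _), angIco_line]

lemma toPhi_ortho (ψ : Set.Ico (0:ℝ) π → Set.Ico (0:ℝ) π)
    (hinv : ∀ θ, ψ (ψ θ) = θ) (hfix : ∀ θ, ψ θ ≠ θ) : IsOrthocompl (toPhi ψ) := by
  refine ⟨?_, ?_, ?_⟩
  · intro a b hba
    by_cases hb : b = ⊥
    · rw [hb, toPhi_bot]; exact le_top
    by_cases ha : a = ⊤
    · rw [ha, toPhi_top]; exact bot_le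
    have ha' : a ≠ ⊥ := fun h => hb (le_bot_iff.1 (h ▸ hba))
    have hb' : b ≠ ⊤ := fun h => ha (top_le_iff.1 (h ▸ hba))
    have hba' : b = a := by
      have := le_line (b := b) (θ := (angIco a : ℝ)) (by rwa [line_angIco ha' ha]) hb
      rw [this, line_angIco ha' ha]
    rw [hba']
  · intro a
    by_cases hb : a = ⊥
    · rw [hb, toPhi_bot, toPhi_top]
    by_cases ht : a = ⊤
    · rw [ht, toPhi_top, toPhi_bot]
    rw [toPhi_of_ne ψ hb ht, toPhi_line, hinv, line_angIco hb ht]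
  · intro a b hba hbp
    by_contra hb
    by_cases ha : a = ⊥
    · exact hb (le_bot_iff.1 (ha ▸ hba))
    by_cases ht : a = ⊤
    · rw [ht, toPhi_top] at hbp
      exact hb (le_bot_iff.1 hbp)
    rw [toPhi_of_ne ψ ha ht] at hbp
    have h1 : b = line ((angIco a : ℝ)) := le_line (by rwa [line_angIco ha ht]) hb
    have h2 : b = line ((ψ (angIco a) : ℝ)) := le_line hbp hb
    have : ψ (angIco a) = angIco a :=
      Subtype.ext (line_inj (ψ (angIco a)).2 (angIco a).2 (h2.symm.trans h1))
    exact hfix _ this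

lemma ortho_psi_invol {Ψ : Submodule ℝ (Fin 2 → ℝ) → Submodule ℝ (Fin 2 → ℝ)}
    (hΨ : IsOrthocompl Ψ) (θ : Set.Ico (0:ℝ) π) :
    angIco (Ψ (line ((angIco (Ψ (line (θ:ℝ))) : ℝ)))) = θ := by
  rw [line_angIco (ortho_line_ne_bot hΨ _) (ortho_line_ne_top hΨ _), hΨ.2.1, angIco_line]

lemma ortho_psi_ne {Ψ : Submodule ℝ (Fin 2 → ℝ) → Submodule ℝ (Fin 2 → ℝ)}
    (hΨ : IsOrthocompl Ψ) (θ : Set.Ico (0:ℝ) π) :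
    angIco (Ψ (line (θ:ℝ))) ≠ θ := by
  intro h
  have hline : Ψ (line (θ:ℝ)) = line (θ:ℝ) := by
    conv_rhs => rw [← h]
    rw [line_angIco (ortho_line_ne_bot hΨ _) (ortho_line_ne_top hΨ _)]
  have := hΨ.2.2 (line (θ:ℝ)) (line (θ:ℝ)) le_rfl (by rw [hline])
  exact line_ne_bot _ this

/-- Orthocomplementations on `G(ℝ²)` are in one-one correspondence with
involutive fixed-point-free maps `ψ : [0, π) → [0, π)`, `Ψ` and `ψ` corresponding iff
`Ψ(span{(cos θ, sin θ)}) = span{(cos ψ(θ), sin ψ(θ))}` for all `θ`. -/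
theorem stmt_5 :
    ∃ e : {Ψ : Submodule ℝ (Fin 2 → ℝ) → Submodule ℝ (Fin 2 → ℝ) // IsOrthocompl Ψ} ≃
          {ψ : Set.Ico (0 : ℝ) Real.pi → Set.Ico (0 : ℝ) Real.pi //
            (∀ θ, ψ (ψ θ) = θ) ∧ (∀ θ, ψ θ ≠ θ)},
      ∀ Ψ ψ, e Ψ = ψ ↔
        ∀ θ : Set.Ico (0 : ℝ) Real.pi, Ψ.1 (line (θ : ℝ)) = line ((ψ.1 θ : ℝ)) := by
  refine ⟨⟨fun Ψ => ⟨fun θ => angIco (Ψ.1 (line (θ:ℝ))),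
      fun θ => ortho_psi_invol Ψ.2 θ, fun θ => ortho_psi_ne Ψ.2 θ⟩,
      fun ψ => ⟨toPhi ψ.1, toPhi_ortho ψ.1 ψ.2.1 ψ.2.2⟩, ?_, ?_⟩, ?_⟩
  · -- left inverse
    rintro ⟨Ψ, hΨ⟩
    apply Subtype.ext
    funext W
    show toPhi (fun θ => angIco (Ψ (line (θ:ℝ)))) W = Ψ W
    by_cases hb : W = ⊥
    · rw [hb, toPhi_bot, ortho_bot hΨ]
    by_cases ht : W = ⊤
    · rw [ht, toPhi_top, ortho_top hΨ]
    rw [toPhi_of_ne _ hb ht]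
    show line ((angIco (Ψ (line ((angIco W : ℝ)))) : ℝ)) = Ψ W
    rw [line_angIco (ortho_line_ne_bot hΨ _) (ortho_line_ne_top hΨ _), line_angIco hb ht]
  · -- right inverse
    rintro ⟨ψ, hψ⟩
    apply Subtype.ext
    funext θ
    show angIco (toPhi ψ (line (θ:ℝ))) = ψ θ
    rw [toPhi_line, angIco_line]
  · -- characterization
    rintro ⟨Ψ, hΨ⟩ ⟨ψ, hψ⟩
    constructor
    · intro h θ
      have hv : (fun θ : Set.Ico (0:ℝ) π => angIco (Ψ (line (θ:ℝ)))) = ψ := congrArg Subtype.val h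
      have hθ : ψ θ = angIco (Ψ (line (θ:ℝ))) := by rw [← hv]
      show Ψ (line (θ:ℝ)) = line ((ψ θ : ℝ))
      rw [hθ, line_angIco (ortho_line_ne_bot hΨ _) (ortho_line_ne_top hΨ _)]
    · intro h
      have h' : ∀ θ : Set.Ico (0:ℝ) π, Ψ (line (θ:ℝ)) = line ((ψ θ : ℝ)) := h
      apply Subtype.ext
      funext θ
      show angIco (Ψ (line (θ:ℝ))) = ψ θ
      rw [h' θ, angIco_line]
end

section
/- Let (L, ≤, ⊤, 0, 1) be a separated locality lattice, and for a ∈ L write grt(a^⊤) for the greatest element of the polar set a^⊤. Then the following two conditions are equivalent: (i) for all a ∈ L, a^⊤ = {0} if and only if a = 1; (ii) the closedness condition: for all a ∈ L, a ∨ grt(a^⊤) = 1. -/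
/-- In a separated locality lattice, the condition `a^⊤ = {⊥} ↔ a = ⊤`
is equivalent to the closedness condition `a ⊔ grt(a^⊤) = ⊤`. -/
theorem stmt_8 {L : Type*} [Lattice L] [BoundedOrder L] (T : L → L → Prop)
    (hsym : ∀ a b : L, T a b → T b a)
    (hlow : ∀ a : L, IsLowerSet {x | T a x})
    (hjoin : ∀ a b c : L, T a b → T a c → T a (b ⊔ c))
    (hsep : ∀ a b : L, T a b → a ⊓ b = ⊥)
    (grt : L → L) (hgrt : ∀ a : L, IsGreatest {x | T a x} (grt a)) :
    (∀ a : L, {x | T a x} = ({⊥} : Set L) ↔ a = ⊤) ↔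
    (∀ a : L, a ⊔ grt a = ⊤) := by
  have hbot : ∀ a : L, T a ⊥ := fun a => hlow a bot_le (hgrt a).1
  constructor
  · intro h a
    apply (h (a ⊔ grt a)).mp
    ext x
    simp only [Set.mem_setOf_eq, Set.mem_singleton_iff]
    constructor
    · intro hx
      have hxa : T a x := hsym x a (hlow x le_sup_left (hsym _ _ hx))
      have hxg : T (grt a) x := hsym x _ (hlow x le_sup_right (hsym _ _ hx))
      have hle : x ≤ grt a := (hgrt a).2 hxa
      have := hsep (grt a) x hxg
      rw [inf_eq_right.mpr hle] at this
      exact this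
    · rintro rfl; exact hbot _
  · intro h a
    constructor
    · intro ha
      have : grt a ∈ ({⊥} : Set L) := ha ▸ (hgrt a).1
      rw [Set.mem_singleton_iff] at this
      have h2 := h a
      rwa [this, sup_bot_eq] at h2
    · rintro rfl
      ext x
      simp only [Set.mem_setOf_eq, Set.mem_singleton_iff]
      constructor
      · intro hx
        have := hsep ⊤ x hx
        rwa [top_inf_eq] at this
      · rintro rfl; exact hbot _
end

section
/- Let (L, ≤, ⊤, 0, 1) be a strongly separated locality lattice. Then the closedness condition holds: a ∨ grt(a^⊤) = 1 for all a ∈ L (and a^⊤ = {0} if and only if a = 1). -/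
/-- A strongly separated locality lattice satisfies the closedness
condition `a ⊔ grt(a^⊤) = ⊤` (and `a^⊤ = {⊥} ↔ a = ⊤`). -/
theorem stmt_10 {L : Type*} [Lattice L] [BoundedOrder L] (T : L → L → Prop)
    (hsym : ∀ a b : L, T a b → T b a)
    (hlow : ∀ a : L, IsLowerSet {x | T a x})
    (hjoin : ∀ a b c : L, T a b → T a c → T a (b ⊔ c))
    (hsep : ∀ a b : L, T a b → a ⊓ b = ⊥)
    (grt : L → L) (hgrt : ∀ a : L, IsGreatest {x | T a x} (grt a))
    (hstrong : ∀ a : L, IsGreatest {x | ∀ y : L, T a y → T y x} a) :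
    (∀ a : L, a ⊔ grt a = ⊤) ∧
    (∀ a : L, {x | T a x} = ({⊥} : Set L) ↔ a = ⊤) := by
  -- every element is related to ⊥
  have hbot : ∀ a : L, T a ⊥ := fun a =>
    hlow a (bot_le : (⊥ : L) ≤ grt a) (hgrt a).1
  -- polar of a ⊔ grt a is {⊥}
  have hkey : ∀ a y : L, T (a ⊔ grt a) y → y = ⊥ := by
    intro a y hy
    have hys : T y (a ⊔ grt a) := hsym _ _ hy
    have hya : T y a := hlow y le_sup_left hys
    have hyg : T y (grt a) := hlow y le_sup_right hys
    have hle : y ≤ grt a := (hgrt a).2 (hsym _ _ hya)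
    have := hsep _ _ hyg
    rwa [inf_eq_left.2 hle] at this
  have hclosed : ∀ a : L, a ⊔ grt a = ⊤ := by
    intro a
    have htop : (⊤ : L) ∈ {x | ∀ y : L, T (a ⊔ grt a) y → T y x} := by
      intro y hy
      rw [hkey a y hy]
      exact hsym _ _ (hbot ⊤)
    exact le_antisymm le_top ((hstrong (a ⊔ grt a)).2 htop)
  refine ⟨hclosed, fun a => ⟨fun h => ?_, fun h => ?_⟩⟩
  · have : grt a ∈ ({⊥} : Set L) := h ▸ (hgrt a).1
    have hg : grt a = ⊥ := this
    have := hclosed a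
    rwa [hg, sup_bot_eq] at this
  · subst h
    ext x
    simp only [Set.mem_setOf_eq, Set.mem_singleton_iff]
    constructor
    · intro hx
      have := hsep _ _ hx
      rwa [top_inf_eq] at this
    · rintro rfl; exact hbot ⊤
end

section
/- Let (L, ≤, 0, 1) be a bounded lattice and let ⊤ be a strongly separating locality relation on L. Then the map Ψ : L → L defined by Ψ(a) := grt(a^⊤) is an orthocomplementation: it is antitone (b ≤ a implies Ψ(a) ≤ Ψ(b)), involutive (Ψ(Ψ(a)) = a for all a), and separating (b ≤ a and b ≤ Ψ(a) imply b = 0). -/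
/-- For a strongly separating locality relation on a bounded lattice, the
map `a ↦ grt(a^⊤)` is an orthocomplementation: antitone, involutive and separating. -/
theorem stmt_11 {L : Type*} [Lattice L] [BoundedOrder L] (T : L → L → Prop)
    (hsym : ∀ a b : L, T a b → T b a)
    (hlow : ∀ a : L, IsLowerSet {x | T a x})
    (hjoin : ∀ a b c : L, T a b → T a c → T a (b ⊔ c))
    (hsep : ∀ a b : L, T a b → a ⊓ b = ⊥)
    (grt : L → L) (hgrt : ∀ a : L, IsGreatest {x | T a x} (grt a))
    (hstrong : ∀ a : L, IsGreatest {x | ∀ y : L, T a y → T y x} a) :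
    (∀ a b : L, b ≤ a → grt a ≤ grt b) ∧
    (∀ a : L, grt (grt a) = a) ∧
    (∀ a b : L, b ≤ a → b ≤ grt a → b = ⊥) := by
  have anti : ∀ a b : L, b ≤ a → grt a ≤ grt b := by
    intro a b hba
    have h1 : T (grt a) a := hsym _ _ (hgrt a).1
    have h2 : T b (grt a) := hsym _ _ (hlow (grt a) hba h1)
    exact (hgrt b).2 h2
  refine ⟨anti, ?_, ?_⟩
  · intro a
    have hle : grt (grt a) ≤ a := by
      apply (hstrong a).2
      intro y hy
      have hyle : y ≤ grt a := (hgrt a).2 hy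
      have : T (grt (grt a)) y := hlow _ hyle (hsym _ _ (hgrt (grt a)).1)
      exact hsym _ _ this
    have hge : a ≤ grt (grt a) := (hgrt (grt a)).2 ((hstrong a).1 _ (hgrt a).1)
    exact le_antisymm hle hge
  · intro a b hba hbg
    have h1 : T a b := hlow a hbg (hgrt a).1
    have h2 : T b b := hlow b hba (hsym _ _ h1)
    have := hsep _ _ h2
    simpa using this
end

section
/- Let (L, ≤, 0, 1) be a bounded lattice. The assignments F : ⊤ ↦ Ψ^⊤ with Ψ^⊤(a) := grt(a^⊤), and G : Ψ ↦ ⊤_Ψ with a ⊤_Ψ b :⟺ b ≤ Ψ(a), are mutually inverse: (i) for every strongly separating locality relation ⊤ on L and all a, b ∈ L, a ⊤ b if and only if b ≤ grt(a^⊤); (ii) for every orthocomplementation Ψ on L and all a ∈ L, the greatest element of the polar set of a with respect to ⊤_Ψ equals Ψ(a). Hence F and G are mutually inverse bijections between the set of strongly separating locality relations on L and the set of orthocomplementations on L. -/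
/-- A strongly separating locality relation on a bounded lattice. -/
def IsStronglySepLoc {L : Type*} [Lattice L] [BoundedOrder L] (T : L → L → Prop) : Prop :=
  (∀ a b : L, T a b → T b a) ∧
  (∀ a : L, IsLowerSet {x | T a x}) ∧
  (∀ a b c : L, T a b → T a c → T a (b ⊔ c)) ∧
  (∀ a b : L, T a b → a ⊓ b = ⊥) ∧
  (∀ a : L, ∃ g : L, IsGreatest {x | T a x} g) ∧
  (∀ a : L, IsGreatest {x | ∀ y : L, T a y → T y x} a)

section Aux

variable {L : Type*} [Lattice L] [BoundedOrder L]

/-- the greatest element of the polar of `a` -/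
noncomputable def grtPolar (T : L → L → Prop) (hT : IsStronglySepLoc T) (a : L) : L :=
  Classical.choose (hT.2.2.2.2.1 a)

lemma grtPolar_spec (T : L → L → Prop) (hT : IsStronglySepLoc T) (a : L) :
    IsGreatest {x | T a x} (grtPolar T hT a) :=
  Classical.choose_spec (hT.2.2.2.2.1 a)

lemma part1 (T : L → L → Prop) (hT : IsStronglySepLoc T) (a b g : L)
    (hg : IsGreatest {x | T a x} g) : T a b ↔ b ≤ g := by
  constructor
  · exact fun h => hg.2 h
  · exact fun h => hT.2.1 a h hg.1

lemma grtPolar_iff (T : L → L → Prop) (hT : IsStronglySepLoc T) (a b : L) :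
    T a b ↔ b ≤ grtPolar T hT a :=
  part1 T hT a b _ (grtPolar_spec T hT a)

lemma grtPolar_isOrtho (T : L → L → Prop) (hT : IsStronglySepLoc T) :
    IsOrthocompl (grtPolar T hT) := by
  obtain ⟨sym, lower, join, meet, ex, grt6⟩ := hT
  set g := grtPolar T ⟨sym, lower, join, meet, ex, grt6⟩ with hgdef
  have hg : ∀ a, IsGreatest {x | T a x} (g a) := grtPolar_spec T _
  have hTg : ∀ a, T a (g a) := fun a => (hg a).1
  refine ⟨?_, ?_, ?_⟩
  · intro a b hba
    refine (hg b).2 ?_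
    exact sym _ _ (lower (g a) hba (sym _ _ (hTg a)))
  · intro a
    have h1 : a ≤ g (g a) := (hg (g a)).2 (sym _ _ (hTg a))
    have h2 : g (g a) ≤ a := by
      refine (grt6 a).2 ?_
      intro y hy
      have hy' : y ≤ g a := (hg a).2 hy
      exact sym _ _ (lower (g (g a)) hy' (sym _ _ (hTg (g a))))
    exact le_antisymm h2 h1
  · intro a b hba hbg
    have : T a b := lower a hbg (hTg a)
    have := meet a b this
    rwa [inf_eq_right.mpr hba] at this

lemma ortho_isLoc (Ψ : L → L) (hΨ : IsOrthocompl Ψ) :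
    IsStronglySepLoc (fun a b => b ≤ Ψ a) := by
  obtain ⟨anti, inv, sep⟩ := hΨ
  have sym : ∀ a b : L, b ≤ Ψ a → a ≤ Ψ b := by
    intro a b h
    have := anti _ _ h
    rwa [inv] at this
  refine ⟨sym, ?_, ?_, ?_, ?_, ?_⟩
  · intro a x y hyx hx
    exact le_trans hyx hx
  · intro a b c hb hc
    exact sup_le hb hc
  · intro a b hb
    exact sep a (a ⊓ b) inf_le_left (le_trans inf_le_right hb)
  · intro a
    exact ⟨Ψ a, le_refl _, fun x hx => hx⟩
  · intro a
    constructor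
    · intro y hy
      exact sym a y hy
    · intro x hx
      have h := hx (Ψ a) (le_refl _)
      simp only at h
      rwa [inv] at h

end Aux

/-- The assignments `F : ⊤ ↦ (a ↦ grt(a^⊤))` and `G : Ψ ↦ (a ⊤ b ↔ b ≤ Ψ a)`
are mutually inverse bijections between strongly separating locality relations and
orthocomplementations on a bounded lattice. -/
theorem stmt_13 {L : Type*} [Lattice L] [BoundedOrder L] :
    (∀ T : L → L → Prop, IsStronglySepLoc T →
      ∀ (a b g : L), IsGreatest {x | T a x} g → (T a b ↔ b ≤ g)) ∧
    (∀ Ψ : L → L, IsOrthocompl Ψ → ∀ a : L, IsGreatest {b | b ≤ Ψ a} (Ψ a)) ∧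
    (∃ e : {T : L → L → Prop // IsStronglySepLoc T} ≃ {Ψ : L → L // IsOrthocompl Ψ},
      (∀ (T : {T : L → L → Prop // IsStronglySepLoc T}) (a : L),
        IsGreatest {x | T.1 a x} ((e T).1 a)) ∧
      (∀ (Ψ : {Ψ : L → L // IsOrthocompl Ψ}) (a b : L),
        (e.symm Ψ).1 a b ↔ b ≤ Ψ.1 a)) := by
  refine ⟨part1, ?_, ?_⟩
  · intro Ψ _ a
    exact ⟨le_refl _, fun b hb => hb⟩
  · refine ⟨{
      toFun := fun T => ⟨grtPolar T.1 T.2, grtPolar_isOrtho T.1 T.2⟩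
      invFun := fun Ψ => ⟨fun a b => b ≤ Ψ.1 a, ortho_isLoc Ψ.1 Ψ.2⟩
      left_inv := ?_
      right_inv := ?_ }, ?_, ?_⟩
    · intro T
      ext a b
      exact (grtPolar_iff T.1 T.2 a b).symm
    · intro Ψ
      ext a
      have h1 : IsGreatest {b | b ≤ Ψ.1 a} (grtPolar _ (ortho_isLoc Ψ.1 Ψ.2) a) :=
        grtPolar_spec _ (ortho_isLoc Ψ.1 Ψ.2) a
      exact le_antisymm h1.1 (h1.2 (le_refl _))
    · intro T a
      exact grtPolar_spec T.1 T.2 a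
    · intro Ψ a b
      exact Iff.rfl
end

section
/- Let V be a finite-dimensional vector space over a field K. The map φ sending a vector-space locality relation ⊤_V on V to the relation ⊤_{V,G} on the subspace lattice G(V) defined by U ⊤_{V,G} W ⟺ (u ⊤_V w for all u ∈ U, w ∈ W), and the map ψ sending a lattice locality relation ⊤_G on G(V) satisfying {0}^{⊤_G} = G(V) to the relation ⊤_{G,V} on V defined by v₁ ⊤_{G,V} v₂ ⟺ span{v₁} ⊤_G span{v₂}, are mutually inverse bijections between the set of vector-space locality relations on V and the set of lattice locality relations ⊤_G on G(V) with {0}^{⊤_G} = G(V). -/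
/-- A vector-space locality relation: a symmetric relation whose polar sets are linear
subspaces. -/
def IsVecLoc (K : Type*) {V : Type*} [Field K] [AddCommGroup V] [Module K V]
    (T : V → V → Prop) : Prop :=
  (∀ a b : V, T a b → T b a) ∧
  (∀ X : Set V, ∃ W : Submodule K V, (W : Set V) = {v | ∀ x ∈ X, T x v})

/-- A lattice locality relation: a symmetric relation whose polar sets are lattice
ideals (lower sets closed under binary joins). -/
def IsLatLoc {L : Type*} [Lattice L] (T : L → L → Prop) : Prop :=
  (∀ a b : L, T a b → T b a) ∧
  (∀ a : L, IsLowerSet {x | T a x}) ∧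
  (∀ a b c : L, T a b → T a c → T a (b ⊔ c))

section Aux

variable {K V : Type*} [Field K] [AddCommGroup V] [Module K V]

lemma polar_mem {T : V → V → Prop} (hT : IsVecLoc K T) (X : Set V) :
    ∃ W : Submodule K V, ∀ v, v ∈ W ↔ ∀ x ∈ X, T x v := by
  obtain ⟨W, hW⟩ := hT.2 X
  exact ⟨W, fun v => by
    constructor
    · intro h; have : v ∈ (W : Set V) := h; rw [hW] at this; exact this
    · intro h; show v ∈ (W : Set V); rw [hW]; exact h⟩

lemma vec_span {T : V → V → Prop} (hT : IsVecLoc K T) {a b : V} (h : T a b)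
    {u w : V} (hu : u ∈ Submodule.span K {a}) (hw : w ∈ Submodule.span K {b}) :
    T u w := by
  obtain ⟨W, hW⟩ := polar_mem (K := K) hT {a}
  have hb : b ∈ W := (hW b).2 (by
    intro x hx; rw [Set.mem_singleton_iff] at hx; rw [hx]; exact h)
  have hwm : w ∈ W := by
    have : Submodule.span K {b} ≤ W := Submodule.span_le.2 (by simpa using hb)
    exact this hw
  have hTaw : T a w := (hW w).1 hwm a rfl
  obtain ⟨W', hW'⟩ := polar_mem (K := K) hT {w}
  have ha : a ∈ W' := (hW' a).2 (by
    intro x hx; rw [Set.mem_singleton_iff] at hx; rw [hx]; exact hT.1 a w hTaw)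
  have hum : u ∈ W' := by
    have : Submodule.span K {a} ≤ W' := Submodule.span_le.2 (by simpa using ha)
    exact this hu
  exact hT.1 w u ((hW' u).1 hum w rfl)

lemma lat_span {TG : Submodule K V → Submodule K V → Prop}
    (h : IsLatLoc TG) (h0 : ∀ W : Submodule K V, TG ⊥ W)
    (U : Submodule K V) {S : Set V} (hS : S.Finite)
    (hall : ∀ v ∈ S, TG U (Submodule.span K {v})) :
    TG U (Submodule.span K S) := by
  revert hall
  refine Set.Finite.induction_on _ hS ?_ ?_
  · intro _; simpa [Submodule.span_empty] using h.1 _ _ (h0 U)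
  · intro a s _ _ ih hall
    rw [Submodule.span_insert]
    exact h.2.2 _ _ _ (hall a (Set.mem_insert a s))
      (ih fun v hv => hall v (Set.mem_insert_of_mem a hv))

lemma lat_all [FiniteDimensional K V] {TG : Submodule K V → Submodule K V → Prop}
    (h : IsLatLoc TG) (h0 : ∀ W : Submodule K V, TG ⊥ W)
    (U W : Submodule K V)
    (hall : ∀ w ∈ W, TG U (Submodule.span K {w})) : TG U W := by
  obtain ⟨S, hSfin, hSspan⟩ := Submodule.fg_def.1 (IsNoetherian.noetherian W)
  rw [← hSspan]
  exact lat_span h h0 U hSfin fun v hv => hall v (hSspan ▸ Submodule.subset_span hv)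

end Aux

/-- For a finite-dimensional vector space `V` over `K`, the maps
`⊤_V ↦ ⊤_{V,G}` and `⊤_G ↦ ⊤_{G,V}` are mutually inverse bijections between
vector-space locality relations on `V` and lattice locality relations on `G(V)`
satisfying `{0}^⊤ = G(V)`. -/
theorem stmt_15 {K V : Type*} [Field K] [AddCommGroup V] [Module K V]
    [FiniteDimensional K V] :
    ∃ e : {T : V → V → Prop // IsVecLoc K T} ≃
          {TG : Submodule K V → Submodule K V → Prop //
            IsLatLoc TG ∧ ∀ W : Submodule K V, TG ⊥ W},
      (∀ (T : {T : V → V → Prop // IsVecLoc K T}) (U W : Submodule K V),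
        (e T).1 U W ↔ ∀ u ∈ U, ∀ w ∈ W, T.1 u w) ∧
      (∀ (TG : {TG : Submodule K V → Submodule K V → Prop //
            IsLatLoc TG ∧ ∀ W : Submodule K V, TG ⊥ W}) (v₁ v₂ : V),
        (e.symm TG).1 v₁ v₂ ↔ TG.1 (Submodule.span K {v₁}) (Submodule.span K {v₂})) := by
  -- forward map
  have φmem : ∀ T : {T : V → V → Prop // IsVecLoc K T},
      IsLatLoc (fun U W : Submodule K V => ∀ u ∈ U, ∀ w ∈ W, T.1 u w) ∧
      ∀ W : Submodule K V, (fun U W : Submodule K V => ∀ u ∈ U, ∀ w ∈ W, T.1 u w) ⊥ W := by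
    intro ⟨T, hT⟩
    refine ⟨⟨fun a b hab u hu w hw => hT.1 _ _ (hab w hw u hu),
        fun a => ?_, fun a b c hb hc => ?_⟩, ?_⟩
    · intro x y hyx hx u hu w hw
      exact hx u hu w (hyx hw)
    · intro u hu w hw
      obtain ⟨W, hW⟩ := polar_mem (K := K) hT (a : Set V)
      have hbW : (b : Set V) ⊆ W := fun z hz => (hW z).2 fun x hx => hb x hx z hz
      have hcW : (c : Set V) ⊆ W := fun z hz => (hW z).2 fun x hx => hc x hx z hz
      have : b ⊔ c ≤ W := sup_le (fun z hz => hbW hz) (fun z hz => hcW hz)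
      exact (hW w).1 (this hw) u hu
    · intro W u hu w hw
      have : u = 0 := by simpa using hu
      obtain ⟨P, hP⟩ := polar_mem (K := K) hT {w}
      have := hT.1 w u ((hP u).1 (this ▸ P.zero_mem) w rfl)
      exact this
  have ψmem : ∀ TG : {TG : Submodule K V → Submodule K V → Prop //
        IsLatLoc TG ∧ ∀ W : Submodule K V, TG ⊥ W},
      IsVecLoc K (fun v₁ v₂ : V => TG.1 (Submodule.span K {v₁}) (Submodule.span K {v₂})) := by
    intro ⟨TG, hTG, h0⟩
    refine ⟨fun a b hab => hTG.1 _ _ hab, fun X => ?_⟩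
    refine ⟨{ carrier := {v | ∀ x ∈ X, TG (Submodule.span K {x}) (Submodule.span K {v})},
              add_mem' := ?_, zero_mem' := ?_, smul_mem' := ?_ }, rfl⟩
    · intro p q hp hq x hx
      have hj := hTG.2.2 _ _ _ (hp x hx) (hq x hx)
      refine hTG.2.1 _ ?_ hj
      exact Submodule.span_le.2 (by
        intro z hz; rw [Set.mem_singleton_iff] at hz; rw [hz]
        exact Submodule.add_mem_sup (Submodule.mem_span_singleton_self p)
          (Submodule.mem_span_singleton_self q))
    · intro x hx
      have : Submodule.span K ({0} : Set V) = ⊥ := Submodule.span_zero_singleton K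
      rw [this]
      exact hTG.1 _ _ (h0 _)
    · intro c p hp x hx
      refine hTG.2.1 _ ?_ (hp x hx)
      exact Submodule.span_le.2 (by
        intro z hz; rw [Set.mem_singleton_iff] at hz; rw [hz]
        exact Submodule.smul_mem _ c (Submodule.mem_span_singleton_self p))
  refine ⟨⟨fun T => ⟨fun U W => ∀ u ∈ U, ∀ w ∈ W, T.1 u w, φmem T⟩,
    fun TG => ⟨fun v₁ v₂ => TG.1 (Submodule.span K {v₁}) (Submodule.span K {v₂}), ψmem TG⟩,
    ?_, ?_⟩, fun T U W => Iff.rfl, fun TG v₁ v₂ => Iff.rfl⟩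
  · -- left inverse: ψ ∘ φ = id
    rintro ⟨T, hT⟩
    apply Subtype.ext
    funext v₁ v₂
    apply propext
    constructor
    · intro h
      exact h v₁ (Submodule.mem_span_singleton_self v₁) v₂
        (Submodule.mem_span_singleton_self v₂)
    · intro h u hu w hw
      exact vec_span hT h hu hw
  · -- right inverse: φ ∘ ψ = id
    rintro ⟨TG, hTG, h0⟩
    apply Subtype.ext
    funext U W
    apply propext
    constructor
    · intro h
      refine lat_all hTG h0 U W fun w hw => ?_
      refine hTG.1 _ _ (lat_all hTG h0 _ U fun u hu => hTG.1 _ _ (h u hu w hw))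
    · intro h u hu w hw
      have h1 : TG U (Submodule.span K {w}) :=
        hTG.2.1 U (Submodule.span_le.2 (by simpa using hw)) h
      have h2 := hTG.1 _ _ h1
      exact hTG.1 _ _ (hTG.2.1 _ (Submodule.span_le.2 (by simpa using hu)) h2)
end

section
/- Let V be a finite-dimensional vector space over a field K and ⊤ a strongly non-degenerate vector-space locality relation on V. Then for every linear subspace U of V one has V = U ⊕ U^⊤, i.e., U + U^⊤ = V and U ∩ U^⊤ = {0}. -/
/-- For a strongly non-degenerate vector-space locality relation `T` on a
finite-dimensional vector space `V`, every linear subspace `U` satisfies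
`V = U ⊕ U^⊤`: `U + U^⊤ = V` and `U ∩ U^⊤ = {0}`. -/
theorem stmt_16 {K V : Type*} [Field K] [AddCommGroup V] [Module K V]
    [FiniteDimensional K V] (T : V → V → Prop)
    (hsym : ∀ a b : V, T a b → T b a)
    (hsub : ∀ X : Set V, ∃ W : Submodule K V, (W : Set V) = {v | ∀ x ∈ X, T x v})
    (hnd : ∀ v : V, T v v → v = 0)
    (hsnd : ∀ U : Submodule K V, U ≠ ⊤ → {v : V | ∀ u ∈ U, T u v} ≠ ({0} : Set V)) :
    ∀ U : Submodule K V,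
      (∀ v : V, ∃ u ∈ U, ∃ w ∈ {x : V | ∀ y ∈ U, T y x}, v = u + w) ∧
      (∀ v ∈ U, (∀ y ∈ U, T y v) → v = 0) := by
  intro U
  obtain ⟨P, hP⟩ := hsub (U : Set V)
  have hPmem : ∀ x, x ∈ P ↔ ∀ y ∈ U, T y x := by
    intro x
    constructor
    · intro hx y hy
      have : x ∈ (P : Set V) := hx
      rw [hP] at this
      exact this y hy
    · intro h
      have : x ∈ ({v | ∀ y ∈ (U : Set V), T y v} : Set V) := h
      rw [← hP] at this
      exact this
  have hsup : U ⊔ P = ⊤ := by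
    by_contra hne
    have hpolar := hsnd (U ⊔ P) hne
    -- polar of U ⊔ P is a submodule, hence contains 0; being ≠ {0} it has a nonzero element
    obtain ⟨Q, hQ⟩ := hsub ((U ⊔ P : Submodule K V) : Set V)
    have hQne : (Q : Set V) ≠ ({0} : Set V) := by rw [hQ]; exact hpolar
    have : ∃ w ∈ Q, w ≠ 0 := by
      by_contra h
      push_neg at h
      apply hQne
      ext x
      simp only [Set.mem_singleton_iff, SetLike.mem_coe]
      constructor
      · intro hx; by_contra hx0; exact hx0 (h x hx)
      · intro hx; subst hx; exact Q.zero_mem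
    obtain ⟨w, hwQ, hw0⟩ := this
    have hwpol : ∀ u ∈ (U ⊔ P : Submodule K V), T u w := by
      have : w ∈ (Q : Set V) := hwQ
      rw [hQ] at this
      exact this
    have hwP : w ∈ P := by
      rw [hPmem]
      intro y hy
      exact hwpol y (Submodule.mem_sup_left hy)
    have : T w w := hwpol w (Submodule.mem_sup_right hwP)
    exact hw0 (hnd w this)
  constructor
  · intro v
    have hv : v ∈ U ⊔ P := by rw [hsup]; exact Submodule.mem_top
    obtain ⟨u, hu, w, hw, huw⟩ := Submodule.mem_sup.mp hv
    exact ⟨u, hu, w, (hPmem w).mp hw, huw.symm⟩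
  · intro v hv hTv
    exact hnd v (hTv v hv)
end

section
/- Let V be a finite-dimensional vector space over a field K, ⊤_V a vector-space locality relation on V, and ⊤_{V,G} the induced relation on the subspace lattice G(V) defined by U ⊤_{V,G} W ⟺ (u ⊤_V w for all u ∈ U, w ∈ W). Then: (1) ⊤_V is non-degenerate if and only if ⊤_{V,G} is a lattice locality relation on G(V) with the separating property that U ⊤_{V,G} W implies U ∩ W = {0}; (2) ⊤_V is strongly non-degenerate if and only if ⊤_{V,G} is a strongly separating locality relation on G(V); in this case the map U ↦ U^{⊤_V} is an orthocomplementation on G(V). -/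
/-- For a vector-space locality relation `T` on a finite-dimensional vector
space `V` with induced relation `TG` on the subspace lattice:
(1) `T` is non-degenerate iff `TG` is a lattice locality relation with the separating
property; (2) `T` is strongly non-degenerate iff `TG` is strongly separating; in that
case `U ↦ U^⊤` is an orthocomplementation on `G(V)`. -/
theorem stmt_17 {K V : Type*} [Field K] [AddCommGroup V] [Module K V]
    [FiniteDimensional K V] (T : V → V → Prop)
    (hsym : ∀ a b : V, T a b → T b a)
    (hsub : ∀ X : Set V, ∃ W : Submodule K V, (W : Set V) = {v | ∀ x ∈ X, T x v})
    (TG : Submodule K V → Submodule K V → Prop)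
    (hTG : ∀ U W : Submodule K V, TG U W ↔ ∀ u ∈ U, ∀ w ∈ W, T u w) :
    ((∀ v : V, T v v → v = 0) ↔
      ((∀ U : Submodule K V, IsLowerSet {W | TG U W}) ∧
       (∀ U W₁ W₂ : Submodule K V, TG U W₁ → TG U W₂ → TG U (W₁ ⊔ W₂)) ∧
       (∀ U W : Submodule K V, TG U W → U ⊓ W = ⊥))) ∧
    (((∀ v : V, T v v → v = 0) ∧
        ∀ U : Submodule K V, U ≠ ⊤ → {v : V | ∀ u ∈ U, T u v} ≠ ({0} : Set V)) ↔
      IsStronglySepLoc TG) ∧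
    (((∀ v : V, T v v → v = 0) ∧
        ∀ U : Submodule K V, U ≠ ⊤ → {v : V | ∀ u ∈ U, T u v} ≠ ({0} : Set V)) →
      ∀ F : Submodule K V → Submodule K V,
        (∀ U : Submodule K V, (F U : Set V) = {v | ∀ u ∈ U, T u v}) →
        IsOrthocompl F) := by
  classical
  obtain ⟨P, hP⟩ : ∃ P : Set V → Submodule K V,
      ∀ X : Set V, (P X : Set V) = {v | ∀ x ∈ X, T x v} :=
    ⟨fun X => (hsub X).choose, fun X => (hsub X).choose_spec⟩
  have hPmem : ∀ (X : Set V) (v : V), v ∈ P X ↔ ∀ x ∈ X, T x v := by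
    intro X v
    rw [← SetLike.mem_coe, hP X]
    exact Iff.rfl
  have hT0 : ∀ w : V, T w 0 := fun w => (hPmem {w} 0).1 (P {w}).zero_mem w rfl
  have hT0' : ∀ w : V, T 0 w := fun w => hsym _ _ (hT0 w)
  have hTGP : ∀ U W : Submodule K V, TG U W ↔ W ≤ P ↑U := by
    intro U W
    rw [hTG]
    constructor
    · intro h w hw
      exact (hPmem _ w).2 fun u hu => h u hu w hw
    · intro h u hu w hw
      exact (hPmem _ w).1 (h hw) u hu
  have hTGsym : ∀ U W : Submodule K V, TG U W → TG W U := by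
    intro U W h
    rw [hTG] at h ⊢
    exact fun u hu w hw => hsym _ _ (h w hw u hu)
  have hUlePP : ∀ U : Submodule K V, U ≤ P ↑(P (↑U : Set V)) := by
    intro U v hv
    exact (hPmem _ v).2 fun w hw => hsym _ _ ((hPmem _ w).1 hw v hv)
  have hspanTG : ∀ v : V, T v v →
      TG (Submodule.span K {v}) (Submodule.span K {v}) := by
    intro v hv
    rw [hTG]
    intro u hu w hw
    obtain ⟨a, rfl⟩ := Submodule.mem_span_singleton.1 hu
    obtain ⟨b, rfl⟩ := Submodule.mem_span_singleton.1 hw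
    have h1 : v ∈ P {v} := (hPmem _ v).2 (by simpa using hv)
    have h3a : T v (a • v) := (hPmem _ _).1 (Submodule.smul_mem _ a h1) v rfl
    have h4 : v ∈ P {a • v} := (hPmem _ v).2 (by
      intro x hx
      rw [Set.mem_singleton_iff] at hx
      subst hx
      exact hsym _ _ h3a)
    exact (hPmem _ _).1 (Submodule.smul_mem _ b h4) _ rfl
  have hsep_nd : (∀ U W : Submodule K V, TG U W → U ⊓ W = ⊥) →
      ∀ v : V, T v v → v = 0 := by
    intro hsep v hv
    have h := hsep _ _ (hspanTG v hv)
    have hv' : v ∈ Submodule.span K {v} := Submodule.mem_span_singleton_self v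
    have : v ∈ (⊥ : Submodule K V) := by
      rw [← h]; exact ⟨hv', hv'⟩
    simpa using this
  have hnd_props : (∀ v : V, T v v → v = 0) →
      ((∀ U : Submodule K V, IsLowerSet {W | TG U W}) ∧
       (∀ U W₁ W₂ : Submodule K V, TG U W₁ → TG U W₂ → TG U (W₁ ⊔ W₂)) ∧
       (∀ U W : Submodule K V, TG U W → U ⊓ W = ⊥)) := by
    intro hnd
    refine ⟨?_, ?_, ?_⟩
    · intro U W W' hle hW
      exact (hTGP U W').2 (le_trans hle ((hTGP U W).1 hW))
    · intro U W₁ W₂ h1 h2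
      exact (hTGP U _).2 (sup_le ((hTGP U W₁).1 h1) ((hTGP U W₂).1 h2))
    · intro U W h
      rw [hTG] at h
      rw [eq_bot_iff]
      intro v hv
      have : v = 0 := hnd v (h v hv.1 v hv.2)
      simp [this]
  have hstrong_main : (∀ v : V, T v v → v = 0) →
      (∀ U : Submodule K V, U ≠ ⊤ → {v : V | ∀ u ∈ U, T u v} ≠ ({0} : Set V)) →
      ∀ U : Submodule K V, P ↑(P (↑U : Set V)) = U := by
    intro hnd hst
    have hinf : ∀ W : Submodule K V, W ⊓ P (↑W : Set V) = ⊥ := by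
      intro W
      rw [eq_bot_iff]
      intro v hv
      have : T v v := (hPmem _ v).1 hv.2 v hv.1
      simp [hnd v this]
    have hsup : ∀ W : Submodule K V, W ⊔ P (↑W : Set V) = ⊤ := by
      intro W
      by_contra h
      have h2 := hst _ h
      obtain ⟨v, hv, hv0⟩ : ∃ v, (∀ u ∈ W ⊔ P (↑W : Set V), T u v) ∧ v ≠ 0 := by
        by_contra hc
        push_neg at hc
        apply h2
        ext x
        simp only [Set.mem_setOf_eq, Set.mem_singleton_iff]
        exact ⟨fun hx => hc x hx, fun hx => hx ▸ fun u _ => hT0 u⟩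
      have hvP : v ∈ P (↑W : Set V) :=
        (hPmem _ v).2 fun u hu => hv u (Submodule.mem_sup_left hu)
      exact hv0 (hnd v (hv v (Submodule.mem_sup_right hvP)))
    have hrank : ∀ W : Submodule K V,
        Module.finrank K W + Module.finrank K (P (↑W : Set V)) =
          Module.finrank K V := by
      intro W
      have h := Submodule.finrank_sup_add_finrank_inf_eq W (P (↑W : Set V))
      rw [hsup W, hinf W] at h
      simpa using h.symm
    intro U
    have h1 := hrank U
    have h2 := hrank (P (↑U : Set V))
    have hle := hUlePP U
    have hfr : Module.finrank K (P (↑(P (↑U : Set V)) : Set V)) ≤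
        Module.finrank K U := by omega
    exact (Submodule.eq_of_le_of_finrank_le hle hfr).symm
  refine ⟨⟨fun hnd => hnd_props hnd, fun h => hsep_nd h.2.2⟩, ?_, ?_⟩
  · constructor
    · rintro ⟨hnd, hst⟩
      obtain ⟨hlow, hjoin, hsep⟩ := hnd_props hnd
      have hPP := hstrong_main hnd hst
      refine ⟨hTGsym, hlow, hjoin, hsep, ?_, ?_⟩
      · intro U
        exact ⟨P ↑U, (hTGP U _).2 le_rfl, fun W hW => (hTGP U W).1 hW⟩
      · intro U
        constructor
        · intro y hy
          exact hTGsym _ _ hy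
        · intro x hx
          have h2 := hx _ ((hTGP U _).2 le_rfl)
          exact le_trans ((hTGP _ _).1 h2) (le_of_eq (hPP U))
    · rintro ⟨hsy, hlow, hjoin, hsep, hex, hgr⟩
      refine ⟨hsep_nd hsep, ?_⟩
      intro U hU hset
      have htop : (⊤ : Submodule K V) ∈ {x | ∀ y, TG U y → TG y x} := by
        intro y hy
        have hy0 : y = ⊥ := by
          rw [eq_bot_iff]
          intro w hw
          have hmem : w ∈ {v : V | ∀ u ∈ U, T u v} :=
            fun u hu => (hTG U y).1 hy u hu w hw
          rw [hset] at hmem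
          simp only [Set.mem_singleton_iff] at hmem
          simp [hmem]
        subst hy0
        rw [hTG]
        intro u hu w hw
        have hu0 : u = 0 := by simpa using hu
        subst hu0
        exact hT0' w
      have := (hgr U).2 htop
      exact hU (top_le_iff.mp this)
  · rintro ⟨hnd, hst⟩ F hF
    have hFP : ∀ U : Submodule K V, F U = P (↑U : Set V) := fun U =>
      SetLike.coe_injective ((hF U).trans (hP _).symm)
    have hPP := hstrong_main hnd hst
    refine ⟨?_, ?_, ?_⟩
    · intro a b hba
      rw [hFP, hFP]
      intro v hv
      exact (hPmem _ v).2 fun x hx => (hPmem _ v).1 hv x (hba hx)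
    · intro a
      rw [hFP, hFP, hPP]
    · intro a b hba hbF
      rw [eq_bot_iff]
      intro v hv
      have h1 : T v v := (hPmem _ v).1 (hFP a ▸ hbF hv) v (hba hv)
      simp [hnd v h1]
end

section
/- Let V be a vector space over a field K admitting a countable basis, and let ⊤ be a strongly non-degenerate vector-space locality relation on V. Then V has a locality basis for ⊤: there exists a basis (u_n) of V such that u_i ⊤ u_j for all indices i ≠ j. -/
open Submodule Set

private lemma aux_li_of_not_mem_span_earlier {K V : Type*} [Field K] [AddCommGroup V]
    [Module K V] {ι' : Type*} [LinearOrder ι'] {f : ι' → V}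
    (h : ∀ n, f n ∉ Submodule.span K (f '' Set.Iio n)) : LinearIndependent K f := by
  rw [linearIndependent_iff']
  intro s
  induction s using Finset.strongInductionOn with
  | _ s ih =>
    intro g hsum i hi
    have hne : s.Nonempty := ⟨i, hi⟩
    set N := s.max' hne with hNdef
    have hN : N ∈ s := s.max'_mem hne
    have herase : ∀ j ∈ s.erase N, f j ∈ Submodule.span K (f '' Set.Iio N) := by
      intro j hj
      rcases Finset.mem_erase.mp hj with ⟨hjne, hjs⟩
      exact Submodule.subset_span ⟨j, lt_of_le_of_ne (s.le_max' j hjs) hjne, rfl⟩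
    have hsplit : ∑ j ∈ s.erase N, g j • f j + g N • f N = 0 := by
      rw [Finset.sum_erase_add s _ hN]; exact hsum
    have hgN : g N = 0 := by
      by_contra hgN
      apply h N
      have hmem : g N • f N ∈ Submodule.span K (f '' Set.Iio N) := by
        have : g N • f N = -∑ j ∈ s.erase N, g j • f j := by
          rw [eq_neg_iff_add_eq_zero, add_comm]; exact hsplit
        rw [this]
        exact neg_mem (Submodule.sum_mem _ fun j hj =>
          Submodule.smul_mem _ _ (herase j hj))
      have := Submodule.smul_mem _ (g N)⁻¹ hmem
      rwa [inv_smul_smul₀ hgN] at this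
    have hrest : ∑ j ∈ s.erase N, g j • f j = 0 := by
      rw [hgN, zero_smul, add_zero] at hsplit; exact hsplit
    have hall := ih (s.erase N) (Finset.erase_ssubset hN) g hrest
    by_cases hiN : i = N
    · rw [hiN]; exact hgN
    · exact hall i (Finset.mem_erase.mpr ⟨hiN, hi⟩)

/-- A vector space with a countable basis equipped with a strongly
non-degenerate vector-space locality relation admits a locality basis: a basis whose
members are pairwise related by the relation. -/
theorem stmt_18 {K V : Type*} [Field K] [AddCommGroup V] [Module K V]
    (ι : Type) [Countable ι] (b : Module.Basis ι K V)
    (T : V → V → Prop)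
    (hsym : ∀ a b : V, T a b → T b a)
    (hsub : ∀ X : Set V, ∃ W : Submodule K V, (W : Set V) = {v | ∀ x ∈ X, T x v})
    (hnd : ∀ v : V, T v v → v = 0)
    (hsnd : ∀ U : Submodule K V, U ≠ ⊤ → {v : V | ∀ u ∈ U, T u v} ≠ ({0} : Set V)) :
    ∃ (κ : Type) (c : Module.Basis κ K V), ∀ i j : κ, i ≠ j → T (c i) (c j) := by
  classical
  -- trivial case
  by_cases hempty : IsEmpty ι
  · haveI : Subsingleton V := b.repr.toEquiv.subsingleton
    exact ⟨Empty, Module.Basis.empty V, fun i => i.elim⟩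
  haveI : Nonempty ι := not_isEmpty_iff.mp hempty
  -- polar operator
  set P : Set V → Submodule K V := fun X => Classical.choose (hsub X) with hPdef
  have hP : ∀ X : Set V, ((P X : Set V)) = {v | ∀ x ∈ X, T x v} :=
    fun X => Classical.choose_spec (hsub X)
  have hPmem : ∀ (X : Set V) (v : V), v ∈ P X ↔ ∀ x ∈ X, T x v := by
    intro X v
    constructor
    · intro hv; have : v ∈ (P X : Set V) := hv
      rw [hP] at this; exact this
    · intro hv; show v ∈ (P X : Set V); rw [hP]; exact hv
  -- every subspace together with its polar spans V
  have hcompl : ∀ U : Submodule K V, U ⊔ P ↑U = ⊤ := by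
    intro U
    by_contra hW
    set W : Submodule K V := U ⊔ P ↑U with hWdef
    have hne := hsnd W hW
    have hPW : ((P (W : Set V) : Set V)) = {v | ∀ u ∈ W, T u v} := by
      rw [hP]; ext v; simp [SetLike.mem_coe]
    rw [← hPW] at hne
    have hsub0 : ({0} : Set V) ⊆ (P (W : Set V) : Set V) := by
      intro x hx; rw [Set.mem_singleton_iff] at hx; subst hx; exact zero_mem _
    have : ¬ ((P (W : Set V) : Set V) ⊆ ({0} : Set V)) := fun hs =>
      hne (Set.Subset.antisymm hs hsub0)
    obtain ⟨v, hvP, hv0⟩ := Set.not_subset.mp this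
    rw [Set.mem_singleton_iff] at hv0
    have hvW : ∀ x ∈ W, T x v := (hPmem _ v).mp hvP
    have hvU : v ∈ P (U : Set V) := (hPmem _ v).mpr fun x hx => hvW x (le_sup_left (a := U) hx)
    have hvinW : v ∈ W := le_sup_right (a := U) hvU
    exact hv0 (hnd v (hvW v hvinW))
  -- decomposition function
  have hdec : ∀ (U₀ : Submodule K V) (v : V), ∃ q, (∀ x ∈ U₀, T x q) ∧ v - q ∈ U₀ := by
    intro U₀ v
    have hv : v ∈ U₀ ⊔ P ↑U₀ := by rw [hcompl U₀]; trivial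
    obtain ⟨y, hy, z, hz, hyz⟩ := Submodule.mem_sup.mp hv
    refine ⟨z, fun x hx => (hPmem _ z).mp hz x hx, ?_⟩
    have : v - z = y := by rw [← hyz]; abel
    rw [this]; exact hy
  set g : Submodule K V → V → V := fun U₀ v => Classical.choose (hdec U₀ v) with hgdef
  have hg₁ : ∀ (U₀ : Submodule K V) (v : V), ∀ x ∈ U₀, T x (g U₀ v) :=
    fun U₀ v => (Classical.choose_spec (hdec U₀ v)).1
  have hg₂ : ∀ (U₀ : Submodule K V) (v : V), v - g U₀ v ∈ U₀ :=
    fun U₀ v => (Classical.choose_spec (hdec U₀ v)).2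
  -- spanning sequence
  obtain ⟨e, he⟩ := exists_surjective_nat ι
  set f : ℕ → V := b ∘ e with hfdef
  have hfspan : Submodule.span K (Set.range f) = ⊤ := by
    rw [hfdef, Set.range_comp, he.range_eq, Set.image_univ, b.span_eq]
  -- recursive construction
  set U : ℕ → Submodule K V :=
    fun n => Nat.rec ⊥ (fun m Um => Um ⊔ Submodule.span K {g Um (f m)}) n with hUdef
  set u : ℕ → V := fun n => g (U n) (f n) with hudef
  have hUsucc : ∀ n, U (n + 1) = U n ⊔ Submodule.span K {u n} := fun n => rfl
  have hUmono : Monotone U := monotone_nat_of_le_succ fun n => by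
    rw [hUsucc]; exact le_sup_left
  have huU : ∀ n, u n ∈ U (n + 1) := fun n => by
    rw [hUsucc]
    exact le_sup_right (a := U n) (Submodule.mem_span_singleton_self _)
  have hfU : ∀ n, f n ∈ U (n + 1) := fun n => by
    have : f n = (f n - u n) + u n := by abel
    rw [this]
    exact add_mem (hUmono (Nat.le_succ n) (hg₂ (U n) (f n))) (huU n)
  have hpol : ∀ n, ∀ x ∈ U n, T x (u n) := fun n => hg₁ (U n) (f n)
  have hzero : ∀ n, u n ∈ U n → u n = 0 := fun n hn => hnd _ (hpol n _ hn)
  have hUle : ∀ n, U n ≤ Submodule.span K (Set.range u) := by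
    intro n
    induction n with
    | zero => exact bot_le
    | succ m ihm =>
      rw [hUsucc]
      exact sup_le ihm (Submodule.span_le.mpr (Set.singleton_subset_iff.mpr
        (Submodule.subset_span ⟨m, rfl⟩)))
  have hspanu : ⊤ ≤ Submodule.span K (Set.range u) := by
    rw [← hfspan]
    exact Submodule.span_le.mpr (by rintro x ⟨n, rfl⟩; exact hUle (n + 1) (hfU n))
  -- the basis
  set c0 : {n : ℕ // u n ≠ 0} → V := fun k => u k.1 with hc0def
  have hspanIio : ∀ k : {n : ℕ // u n ≠ 0},
      Submodule.span K (c0 '' Set.Iio k) ≤ U k.1 := by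
    intro k
    apply Submodule.span_le.mpr
    rintro x ⟨m, hm, rfl⟩
    show u m.1 ∈ U k.1
    exact hUmono (Nat.succ_le_of_lt (Subtype.coe_lt_coe.mpr hm)) (huU m.1)
  have hli : LinearIndependent K c0 :=
    aux_li_of_not_mem_span_earlier fun k hk => k.2 (hzero k.1 (hspanIio k hk))
  have hsp : ⊤ ≤ Submodule.span K (Set.range c0) := by
    refine le_trans hspanu (Submodule.span_le.mpr ?_)
    rintro x ⟨n, rfl⟩
    by_cases h0 : u n = 0
    · rw [h0]; exact zero_mem _
    · exact Submodule.subset_span ⟨⟨n, h0⟩, rfl⟩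
  refine ⟨_, Module.Basis.mk hli hsp, ?_⟩
  intro i j hij
  rw [Module.Basis.mk_apply, Module.Basis.mk_apply]
  have hij' : (i : ℕ) ≠ (j : ℕ) := fun h => hij (Subtype.ext h)
  rcases hij'.lt_or_gt with h | h
  · exact hpol j.1 _ (hUmono (Nat.succ_le_of_lt h) (huU i.1))
  · exact hsym _ _ (hpol i.1 _ (hUmono (Nat.succ_le_of_lt h) (huU j.1)))
end
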